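/- Let R > 0, c > 0 and set a = √c. Let L : [0,R] → ℝ be continuously differentiable with L ≥ 0 and L(0) = 0, and fix t ∈ (0,R]. Assume that for every continuously differentiable function φ : [0,t] → ℝ with φ ≥ 0, φ′ ≤ 0 and φ(t) = 0 one has −2∫₀^t φ(r)φ′(r)L′(r) dr ≤ 2π·φ(0)² + ∫₀^t (φ′(r))²·L(r) dr + 3c·∫₀^t φ(r)²·L(r) dr. Then for every continuously differentiable function ψ : [0,t] → ℝ with ψ ≥ 0, ψ′ ≤ 0 and ψ(t) = 0 one has −2∫₀^t e^{−2ar}·ψ(r)ψ′(r)·L′(r) dr ≤ 2π·ψ(0)² + ∫₀^t (ψ′(r))²·e^{−2ar}·L(r) dr + 2a·∫₀^t ψ(r)ψ′(r)·e^{−2ar}·L(r) dr. -/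

import Mathlib

open Real MeasureTheory intervalIntegral Set

theorem stmt_3 (R c a : ℝ) (hR : 0 < R) (hc : 0 < c)
    (ha : a = Real.sqrt c)
    (L L' : ℝ → ℝ)
    (hL : ∀ r ∈ Set.Icc (0:ℝ) R, HasDerivAt L (L' r) r)
    (hL' : ContinuousOn L' (Set.Icc (0:ℝ) R))
    (hLnn : ∀ r ∈ Set.Icc (0:ℝ) R, 0 ≤ L r)
    (hL0 : L 0 = 0)
    (t : ℝ) (ht : t ∈ Set.Ioc (0:ℝ) R)
    (hyp : ∀ φ φ' : ℝ → ℝ,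
      (∀ r ∈ Set.Icc (0:ℝ) t, HasDerivAt φ (φ' r) r) →
      ContinuousOn φ' (Set.Icc (0:ℝ) t) →
      (∀ r ∈ Set.Icc (0:ℝ) t, 0 ≤ φ r) →
      (∀ r ∈ Set.Icc (0:ℝ) t, φ' r ≤ 0) →
      φ t = 0 →
      -2 * ∫ r in (0:ℝ)..t, φ r * φ' r * L' r
        ≤ 2 * Real.pi * (φ 0) ^ 2 + (∫ r in (0:ℝ)..t, (φ' r) ^ 2 * L r)
          + 3 * c * ∫ r in (0:ℝ)..t, (φ r) ^ 2 * L r) :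
    ∀ ψ ψ' : ℝ → ℝ,
      (∀ r ∈ Set.Icc (0:ℝ) t, HasDerivAt ψ (ψ' r) r) →
      ContinuousOn ψ' (Set.Icc (0:ℝ) t) →
      (∀ r ∈ Set.Icc (0:ℝ) t, 0 ≤ ψ r) →
      (∀ r ∈ Set.Icc (0:ℝ) t, ψ' r ≤ 0) →
      ψ t = 0 →
      -2 * ∫ r in (0:ℝ)..t, Real.exp (-2 * a * r) * (ψ r * ψ' r) * L' r
        ≤ 2 * Real.pi * (ψ 0) ^ 2
          + (∫ r in (0:ℝ)..t, (ψ' r) ^ 2 * Real.exp (-2 * a * r) * L r)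
          + 2 * a * ∫ r in (0:ℝ)..t, ψ r * ψ' r * Real.exp (-2 * a * r) * L r := by
  intro ψ ψ' hψ hψ'c hψnn hψ'np hψt
  have ht0 : (0:ℝ) ≤ t := ht.1.le
  have huIcc : Set.uIcc (0:ℝ) t = Set.Icc 0 t := Set.uIcc_of_le ht0
  have hsub : Set.Icc (0:ℝ) t ⊆ Set.Icc 0 R := Set.Icc_subset_Icc le_rfl ht.2
  have ha0 : 0 ≤ a := ha ▸ Real.sqrt_nonneg c
  have ha2 : a ^ 2 = c := by rw [ha]; exact Real.sq_sqrt hc.le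
  -- continuity facts
  have hψcont : ContinuousOn ψ (Set.Icc 0 t) := fun r hr =>
    (hψ r hr).continuousAt.continuousWithinAt
  have hLcont : ContinuousOn L (Set.Icc 0 t) := fun r hr =>
    (hL r (hsub hr)).continuousAt.continuousWithinAt
  have hL'cont : ContinuousOn L' (Set.Icc 0 t) := hL'.mono hsub
  have hEcont : ContinuousOn (fun r : ℝ => Real.exp (-2 * a * r)) (Set.Icc 0 t) :=
    (Real.continuous_exp.comp (continuous_const.mul continuous_id)).continuousOn
  have hInt : ∀ f : ℝ → ℝ, ContinuousOn f (Set.Icc 0 t) →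
      IntervalIntegrable f volume 0 t := by
    intro f hf
    exact (huIcc ▸ hf : ContinuousOn f (Set.uIcc 0 t)).intervalIntegrable
  -- the test function
  set φ : ℝ → ℝ := fun r => Real.exp (-a * r) * ψ r with hφdef
  set φ' : ℝ → ℝ := fun r => Real.exp (-a * r) * (ψ' r - a * ψ r) with hφ'def
  have hφd : ∀ r ∈ Set.Icc (0:ℝ) t, HasDerivAt φ (φ' r) r := by
    intro r hr
    have hE : HasDerivAt (fun x : ℝ => Real.exp (-a * x)) (-a * Real.exp (-a * r)) r := by
      have h1 : HasDerivAt (fun x : ℝ => -a * x) (-a) r := by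
        simpa using (hasDerivAt_id r).const_mul (-a)
      simpa [mul_comm] using h1.exp
    have := hE.fun_mul (hψ r hr)
    refine this.congr_deriv ?_
    simp only [hφ'def]; ring
  have hφ'c : ContinuousOn φ' (Set.Icc (0:ℝ) t) := by
    apply ContinuousOn.mul
    · exact (Real.continuous_exp.comp (continuous_const.mul continuous_id)).continuousOn
    · exact hψ'c.sub (continuousOn_const.mul hψcont)
  have hφnn : ∀ r ∈ Set.Icc (0:ℝ) t, 0 ≤ φ r := fun r hr =>
    mul_nonneg (Real.exp_nonneg _) (hψnn r hr)
  have hφ'np : ∀ r ∈ Set.Icc (0:ℝ) t, φ' r ≤ 0 := by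
    intro r hr
    have : ψ' r - a * ψ r ≤ 0 :=
      sub_nonpos.2 (le_trans (hψ'np r hr) (mul_nonneg ha0 (hψnn r hr)))
    exact mul_nonpos_of_nonneg_of_nonpos (Real.exp_nonneg _) this
  have hφt : φ t = 0 := by simp [hφdef, hψt]
  have H := hyp φ φ' hφd hφ'c hφnn hφ'np hφt
  -- abbreviations
  set I1 : ℝ := ∫ r in (0:ℝ)..t, Real.exp (-2 * a * r) * (ψ r * ψ' r) * L' r with hI1
  set K : ℝ := ∫ r in (0:ℝ)..t, ψ r ^ 2 * Real.exp (-2 * a * r) * L' r with hK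
  set J1 : ℝ := ∫ r in (0:ℝ)..t, (ψ' r) ^ 2 * Real.exp (-2 * a * r) * L r with hJ1
  set J2 : ℝ := ∫ r in (0:ℝ)..t, ψ r * ψ' r * Real.exp (-2 * a * r) * L r with hJ2
  set J3 : ℝ := ∫ r in (0:ℝ)..t, ψ r ^ 2 * Real.exp (-2 * a * r) * L r with hJ3
  -- integrability of all summands
  have hiI1 : IntervalIntegrable (fun r => Real.exp (-2 * a * r) * (ψ r * ψ' r) * L' r) volume 0 t :=
    hInt _ (((hEcont.mul (hψcont.mul hψ'c))).mul hL'cont)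
  have hiK : IntervalIntegrable (fun r => ψ r ^ 2 * Real.exp (-2 * a * r) * L' r) volume 0 t :=
    hInt _ ((((hψcont.pow 2).mul hEcont)).mul hL'cont)
  have hiJ1 : IntervalIntegrable (fun r => (ψ' r) ^ 2 * Real.exp (-2 * a * r) * L r) volume 0 t :=
    hInt _ ((((hψ'c.pow 2).mul hEcont)).mul hLcont)
  have hiJ2 : IntervalIntegrable (fun r => ψ r * ψ' r * Real.exp (-2 * a * r) * L r) volume 0 t :=
    hInt _ ((((hψcont.mul hψ'c).mul hEcont)).mul hLcont)
  have hiJ3 : IntervalIntegrable (fun r => ψ r ^ 2 * Real.exp (-2 * a * r) * L r) volume 0 t :=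
    hInt _ ((((hψcont.pow 2).mul hEcont)).mul hLcont)
  -- key exp identity
  have hexp2 : ∀ r : ℝ, Real.exp (-a * r) * Real.exp (-a * r) = Real.exp (-2 * a * r) := by
    intro r; rw [← Real.exp_add]; ring_nf
  -- Eq1 : ∫ φ φ' L' = I1 - a * K
  have Eq1 : (∫ r in (0:ℝ)..t, φ r * φ' r * L' r) = I1 - a * K := by
    have : (∫ r in (0:ℝ)..t, φ r * φ' r * L' r)
        = ∫ r in (0:ℝ)..t, (Real.exp (-2 * a * r) * (ψ r * ψ' r) * L' r
            - a * (ψ r ^ 2 * Real.exp (-2 * a * r) * L' r)) := by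
      apply intervalIntegral.integral_congr
      intro r _
      simp only [hφdef, hφ'def]
      have h2 := hexp2 r
      linear_combination ((ψ r * ψ' r - a * ψ r ^ 2) * L' r) * h2
    rw [this, intervalIntegral.integral_sub hiI1 (hiK.const_mul a),
      intervalIntegral.integral_const_mul]
  -- Eq2 : ∫ φ'^2 L = J1 - 2a J2 + a^2 J3
  have Eq2 : (∫ r in (0:ℝ)..t, (φ' r) ^ 2 * L r) = J1 - 2 * a * J2 + a ^ 2 * J3 := by
    have : (∫ r in (0:ℝ)..t, (φ' r) ^ 2 * L r)
        = ∫ r in (0:ℝ)..t, ((ψ' r) ^ 2 * Real.exp (-2 * a * r) * L r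
            - (2 * a) * (ψ r * ψ' r * Real.exp (-2 * a * r) * L r)
            + a ^ 2 * (ψ r ^ 2 * Real.exp (-2 * a * r) * L r)) := by
      apply intervalIntegral.integral_congr
      intro r _
      simp only [hφ'def]
      have h2 := hexp2 r
      linear_combination ((ψ' r - a * ψ r) ^ 2 * L r) * h2
    rw [this,
      intervalIntegral.integral_add ((hiJ1.sub (hiJ2.const_mul (2 * a)))) (hiJ3.const_mul (a ^ 2)),
      intervalIntegral.integral_sub hiJ1 (hiJ2.const_mul (2 * a)),
      intervalIntegral.integral_const_mul, intervalIntegral.integral_const_mul]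
  -- Eq3 : ∫ φ^2 L = J3
  have Eq3 : (∫ r in (0:ℝ)..t, (φ r) ^ 2 * L r) = J3 := by
    apply intervalIntegral.integral_congr
    intro r _
    simp only [hφdef]
    have h2 := hexp2 r
    linear_combination (ψ r ^ 2 * L r) * h2
  -- Eq4 (integration by parts): K = 2a J3 - 2 J2
  have Eq4 : K = 2 * a * J3 - 2 * J2 := by
    set u : ℝ → ℝ := fun r => Real.exp (-2 * a * r) * ψ r ^ 2 with hudef
    set u' : ℝ → ℝ := fun r => Real.exp (-2 * a * r) * (2 * (ψ r * ψ' r) - 2 * a * ψ r ^ 2)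
      with hu'def
    have hud : ∀ r ∈ Set.uIcc (0:ℝ) t, HasDerivAt u (u' r) r := by
      intro r hr
      rw [huIcc] at hr
      have hE : HasDerivAt (fun x : ℝ => Real.exp (-2 * a * x)) (-2 * a * Real.exp (-2 * a * r)) r := by
        have h1 : HasDerivAt (fun x : ℝ => -2 * a * x) (-2 * a) r := by
          simpa using (hasDerivAt_id r).const_mul (-2 * a)
        simpa [mul_comm] using h1.exp
      have hψ2 : HasDerivAt (fun x : ℝ => ψ x ^ 2) (2 * ψ r * ψ' r) r := by
        simpa [mul_comm, mul_assoc] using ((hψ r hr).fun_pow 2)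
      have := hE.fun_mul hψ2
      refine this.congr_deriv ?_
      simp only [hu'def]; ring
    have hLd : ∀ r ∈ Set.uIcc (0:ℝ) t, HasDerivAt L (L' r) r := by
      intro r hr; rw [huIcc] at hr; exact hL r (hsub hr)
    have hiu' : IntervalIntegrable u' volume 0 t :=
      hInt _ (hEcont.mul ((continuousOn_const.mul (hψcont.mul hψ'c)).sub (continuousOn_const.mul (hψcont.pow 2))))
    have hiL' : IntervalIntegrable L' volume 0 t := hInt _ hL'cont
    have hibp := intervalIntegral.integral_mul_deriv_eq_deriv_mul hud hLd hiu' hiL'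
    have hut : u t = 0 := by simp [hudef, hψt]
    have hKu : K = ∫ r in (0:ℝ)..t, u r * L' r := by
      apply intervalIntegral.integral_congr
      intro r _; simp only [hudef]; ring
    have hu'L : (∫ r in (0:ℝ)..t, u' r * L r) = 2 * J2 - 2 * a * J3 := by
      have : (∫ r in (0:ℝ)..t, u' r * L r)
          = ∫ r in (0:ℝ)..t, ((2:ℝ) * (ψ r * ψ' r * Real.exp (-2 * a * r) * L r)
              - (2 * a) * (ψ r ^ 2 * Real.exp (-2 * a * r) * L r)) := by
        apply intervalIntegral.integral_congr
        intro r _; simp only [hu'def]; ring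
      rw [this, intervalIntegral.integral_sub (hiJ2.const_mul 2) (hiJ3.const_mul (2 * a)),
        intervalIntegral.integral_const_mul, intervalIntegral.integral_const_mul]
    rw [hKu, hibp, hut, hL0, hu'L]; ring
  -- assemble
  rw [Eq1, Eq2, Eq3, Eq4, ← ha2] at H
  have hφ0 : φ 0 = ψ 0 := by simp [hφdef]
  rw [hφ0] at H
  nlinarith [H]
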